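/- The function W : (ℂ∖{0})² → ℂ defined by W(y_1, y_2) = (5/2)·y_1 + y_2 − (7/2)·y_1^{−1} + 3·y_1^{−2}y_2^{−1} − (1/2)·y_1^{−1}y_2^{−1} − 4·y_2^{−1} + (1/2)·y_1 y_2^{−1} + y_1^{2} y_2^{−1} has exactly 8 critical points, and each of these critical points is nondegenerate. -/

import Mathlib

/-- The potential function of the monotone fiber `L(2.5,3)` in `X̂₈` with the chosen bulk deformation (energy factor dropped). -/
noncomputable def W : ℂ → ℂ → ℂ := fun y₁ y₂ =>
  (5 / 2) * y₁ + y₂ - (7 / 2) * y₁⁻¹ + 3 * (y₁ ^ 2)⁻¹ * y₂⁻¹ - (1 / 2) * y₁⁻¹ * y₂⁻¹ - 4 * y₂⁻¹ + (1 / 2) * y₁ * y₂⁻¹ + y₁ ^ 2 * y₂⁻¹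

/-- A point of `(ℂ∖{0})²` is a critical point of `W` if both partial
derivatives of `W` vanish there. -/
def IsCritPt (p : ℂ × ℂ) : Prop :=
  p.1 ≠ 0 ∧ p.2 ≠ 0 ∧
    deriv (fun z => W z p.2) p.1 = 0 ∧ deriv (fun z => W p.1 z) p.2 = 0

/-- The Hessian determinant
`(∂²W/∂y₁²)(∂²W/∂y₂²) - (∂²W/∂y₁∂y₂)²` of `W` at a point. -/
noncomputable def hessDet (p : ℂ × ℂ) : ℂ :=
  deriv (deriv (fun z => W z p.2)) p.1 * deriv (deriv (fun z => W p.1 z)) p.2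
    - (deriv (fun w => deriv (fun z => W z w) p.1) p.2) ^ 2

/- ======================= auxiliary material ======================= -/

open Polynomial Filter Topology

/-- first partial derivative of `W` -/
noncomputable def D1 (a b : ℂ) : ℂ :=
  5/2 + 7/2*(a^2)⁻¹ - 6*(a^3)⁻¹*b⁻¹ + 1/2*(a^2)⁻¹*b⁻¹ + 1/2*b⁻¹ + 2*a*b⁻¹

/-- second partial derivative of `W` -/
noncomputable def D2 (a b : ℂ) : ℂ :=
  1 - 3*(a^2)⁻¹*(b^2)⁻¹ + 1/2*a⁻¹*(b^2)⁻¹ + 4*(b^2)⁻¹ - 1/2*a*(b^2)⁻¹ - a^2*(b^2)⁻¹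

lemma WD1 (b : ℂ) {a : ℂ} (ha : a ≠ 0) : HasDerivAt (fun z => W z b) (D1 a b) a := by
  have hia := mul_inv_cancel₀ ha
  have hsq : HasDerivAt (fun z : ℂ => z^2) (2*a) a := by simpa using hasDerivAt_pow 2 a
  have hinv : HasDerivAt (fun z : ℂ => z⁻¹) (-(a^2)⁻¹) a := hasDerivAt_inv ha
  have hsqinv := hsq.inv (pow_ne_zero 2 ha)
  have H := ((((((((hasDerivAt_id a).const_mul ((5:ℂ)/2)).add_const b).sub
      (hinv.const_mul ((7:ℂ)/2))).add ((hsqinv.const_mul (3:ℂ)).mul_const b⁻¹)).sub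
      ((hinv.const_mul ((1:ℂ)/2)).mul_const b⁻¹)).sub_const (4*b⁻¹)).add
      (((hasDerivAt_id a).const_mul ((1:ℂ)/2)).mul_const b⁻¹)).add (hsq.mul_const b⁻¹)
  exact H.congr_deriv (by
    simp only [D1]
    linear_combination ((-6:ℂ)*a⁻¹^3*b⁻¹) * hia)

lemma WD2 (a : ℂ) {b : ℂ} (hb : b ≠ 0) : HasDerivAt (fun w => W a w) (D2 a b) b := by
  have hinv : HasDerivAt (fun w : ℂ => w⁻¹) (-(b^2)⁻¹) b := hasDerivAt_inv hb
  have H := (((((((hasDerivAt_id b).const_add ((5:ℂ)/2*a)).sub_const ((7:ℂ)/2*a⁻¹)).add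
      (hinv.const_mul (3*(a^2)⁻¹))).sub (hinv.const_mul ((1:ℂ)/2*a⁻¹))).sub
      (hinv.const_mul (4:ℂ))).add (hinv.const_mul ((1:ℂ)/2*a))).add (hinv.const_mul (a^2))
  exact H.congr_deriv (show _ = D2 a b by simp only [D2]; ring)

lemma deriv2_fst (b : ℂ) {a : ℂ} (ha : a ≠ 0) :
    deriv (deriv (fun z => W z b)) a
      = -7*(a^3)⁻¹ + 18*(a^4)⁻¹*b⁻¹ - (a^3)⁻¹*b⁻¹ + 2*b⁻¹ := by
  have hia := mul_inv_cancel₀ ha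
  have h1 : deriv (fun z => W z b) =ᶠ[𝓝 a] fun z => D1 z b := by
    filter_upwards [eventually_ne_nhds ha] with z hz
    exact (WD1 b hz).deriv
  rw [h1.deriv_eq]
  have hsq : HasDerivAt (fun z : ℂ => z^2) (2*a) a := by simpa using hasDerivAt_pow 2 a
  have hcub : HasDerivAt (fun z : ℂ => z^3) (3*a^2) a := by simpa using hasDerivAt_pow 3 a
  have hsqinv := hsq.inv (pow_ne_zero 2 ha)
  have hcubinv := hcub.inv (pow_ne_zero 3 ha)
  have H := (((((hsqinv.const_mul ((7:ℂ)/2)).const_add ((5:ℂ)/2)).sub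
      ((hcubinv.const_mul (6:ℂ)).mul_const b⁻¹)).add
      ((hsqinv.const_mul ((1:ℂ)/2)).mul_const b⁻¹)).add_const ((1:ℂ)/2*b⁻¹)).add
      (((hasDerivAt_id a).const_mul (2:ℂ)).mul_const b⁻¹)
  have H' := H.congr_deriv (show _ = -7*(a^3)⁻¹ + 18*(a^4)⁻¹*b⁻¹ - (a^3)⁻¹*b⁻¹ + 2*b⁻¹ by
    linear_combination ((-7:ℂ)*a⁻¹^3 + (-1:ℂ)*a⁻¹^3*b⁻¹ + (18:ℂ)*a⁻¹^4*b⁻¹ + (18:ℂ)*a*a⁻¹^5*b⁻¹) * hia)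
  exact H'.deriv

lemma deriv2_snd (a : ℂ) {b : ℂ} (hb : b ≠ 0) :
    deriv (deriv (fun w => W a w)) b
      = 6*(a^2)⁻¹*(b^3)⁻¹ - a⁻¹*(b^3)⁻¹ - 8*(b^3)⁻¹ + a*(b^3)⁻¹ + 2*a^2*(b^3)⁻¹ := by
  have hib := mul_inv_cancel₀ hb
  have h1 : deriv (fun w => W a w) =ᶠ[𝓝 b] fun w => D2 a w := by
    filter_upwards [eventually_ne_nhds hb] with w hw
    exact (WD2 a hw).deriv
  rw [h1.deriv_eq]
  have hsq : HasDerivAt (fun w : ℂ => w^2) (2*b) b := by simpa using hasDerivAt_pow 2 b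
  have hsqinv := hsq.inv (pow_ne_zero 2 hb)
  have H := (((((hsqinv.const_mul (3*(a^2)⁻¹)).const_sub (1:ℂ)).add
      (hsqinv.const_mul ((1:ℂ)/2*a⁻¹))).add (hsqinv.const_mul (4:ℂ))).sub
      (hsqinv.const_mul ((1:ℂ)/2*a))).sub (hsqinv.const_mul (a^2))
  have H' := H.congr_deriv
    (show _ = 6*(a^2)⁻¹*(b^3)⁻¹ - a⁻¹*(b^3)⁻¹ - 8*(b^3)⁻¹ + a*(b^3)⁻¹ + 2*a^2*(b^3)⁻¹ by
    linear_combination ((-8:ℂ)*b⁻¹^3 + (-1:ℂ)*a⁻¹*b⁻¹^3 + (6:ℂ)*a⁻¹^2*b⁻¹^3 + (1:ℂ)*a*b⁻¹^3 + (2:ℂ)*a^2*b⁻¹^3) * hib)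
  exact H'.deriv

lemma deriv_mixed {a b : ℂ} (ha : a ≠ 0) (hb : b ≠ 0) :
    deriv (fun w => deriv (fun z => W z w) a) b
      = 6*(a^3)⁻¹*(b^2)⁻¹ - 1/2*(a^2)⁻¹*(b^2)⁻¹ - 1/2*(b^2)⁻¹ - 2*a*(b^2)⁻¹ := by
  have h : (fun w => deriv (fun z => W z w) a) = fun w => D1 a w :=
    funext fun w => (WD1 w ha).deriv
  rw [h]
  have hinv : HasDerivAt (fun w : ℂ => w⁻¹) (-(b^2)⁻¹) b := hasDerivAt_inv hb
  have H := ((((hinv.const_mul (6*(a^3)⁻¹)).const_sub ((5:ℂ)/2 + 7/2*(a^2)⁻¹)).add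
      (hinv.const_mul ((1:ℂ)/2*(a^2)⁻¹))).add (hinv.const_mul ((1:ℂ)/2))).add
      (hinv.const_mul (2*a))
  have H' := H.congr_deriv
    (show _ = 6*(a^3)⁻¹*(b^2)⁻¹ - 1/2*(a^2)⁻¹*(b^2)⁻¹ - 1/2*(b^2)⁻¹ - 2*a*(b^2)⁻¹ by ring)
  exact H'.deriv

/-- algebraic characterization of critical points -/
lemma crit_iff {a b : ℂ} : IsCritPt (a, b) ↔ a ≠ 0 ∧ b ≠ 0 ∧
    4*a^4 + a^3 + 5*a^3*b + 7*a*b + a - 12 = 0 ∧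
    2*a^2*b^2 - 2*a^4 - a^3 + 8*a^2 + a - 6 = 0 := by
  constructor
  · intro hp
    simp only [IsCritPt] at hp
    obtain ⟨ha, hb, h1, h2⟩ := hp
    have hia := mul_inv_cancel₀ ha
    have hib := mul_inv_cancel₀ hb
    rw [(WD1 b ha).deriv] at h1
    rw [(WD2 a hb).deriv] at h2
    refine ⟨ha, hb, ?_, ?_⟩
    · have e : 4*a^4 + a^3 + 5*a^3*b + 7*a*b + a - 12 = (2*a^3*b) * D1 a b := by
        simp only [D1]
        linear_combination ((12:ℂ)*b*b⁻¹ + (-7:ℂ)*a*b + (-1:ℂ)*a*b*b⁻¹ + (12:ℂ)*a*a⁻¹*b*b⁻¹ + (-7:ℂ)*a^2*a⁻¹*b + (-1:ℂ)*a^2*a⁻¹*b*b⁻¹ + (12:ℂ)*a^2*a⁻¹^2*b*b⁻¹) * hia + ((12:ℂ) + (-1:ℂ)*a + (-1:ℂ)*a^3 + (-4:ℂ)*a^4) * hib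
      rw [e, h1, mul_zero]
    · have e : 2*a^2*b^2 - 2*a^4 - a^3 + 8*a^2 + a - 6 = (2*a^2*b^2) * D2 a b := by
        simp only [D2]
        linear_combination ((6:ℂ)*b^2*b⁻¹^2 + (-1:ℂ)*a*b^2*b⁻¹^2 + (6:ℂ)*a*a⁻¹*b^2*b⁻¹^2) * hia + ((6:ℂ) + (6:ℂ)*b*b⁻¹ + (-1:ℂ)*a + (-1:ℂ)*a*b*b⁻¹ + (-8:ℂ)*a^2 + (-8:ℂ)*a^2*b*b⁻¹ + (1:ℂ)*a^3 + (1:ℂ)*a^3*b*b⁻¹ + (2:ℂ)*a^4 + (2:ℂ)*a^4*b*b⁻¹) * hib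
      rw [e, h2, mul_zero]
  · rintro ⟨ha, hb, hA, hB⟩
    have hia := mul_inv_cancel₀ ha
    have hib := mul_inv_cancel₀ hb
    refine ⟨ha, hb, ?_, ?_⟩
    · show deriv (fun z => W z b) a = 0
      rw [(WD1 b ha).deriv]
      have e : D1 a b = (4*a^4 + a^3 + 5*a^3*b + 7*a*b + a - 12) / (2*a^3*b) := by
        simp only [D1]
        linear_combination (((-1:ℂ)/2)*b⁻¹ + ((-5:ℂ)/2)*b*b⁻¹ + ((-1:ℂ)/2)*a⁻¹^2*b⁻¹ + ((-7:ℂ)/2)*a⁻¹^2*b*b⁻¹ + (-2:ℂ)*a*b⁻¹ + ((-1:ℂ)/2)*a*a⁻¹*b⁻¹ + ((-5:ℂ)/2)*a*a⁻¹*b*b⁻¹ + (-2:ℂ)*a^2*a⁻¹*b⁻¹ + ((-1:ℂ)/2)*a^2*a⁻¹^2*b⁻¹ + ((-5:ℂ)/2)*a^2*a⁻¹^2*b*b⁻¹ + (-2:ℂ)*a^3*a⁻¹^2*b⁻¹) * hia + (((-5:ℂ)/2) + ((-7:ℂ)/2)*a⁻¹^2) * hib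
      rw [e, hA, zero_div]
    · show deriv (fun w => W a w) b = 0
      rw [(WD2 a hb).deriv]
      have e : D2 a b = (2*a^2*b^2 - 2*a^4 - a^3 + 8*a^2 + a - 6) / (2*a^2*b^2) := by
        simp only [D2]
        linear_combination ((-4:ℂ)*b⁻¹^2 + (-1:ℂ)*b^2*b⁻¹^2 + ((-1:ℂ)/2)*a⁻¹*b⁻¹^2 + ((1:ℂ)/2)*a*b⁻¹^2 + (-4:ℂ)*a*a⁻¹*b⁻¹^2 + (-1:ℂ)*a*a⁻¹*b^2*b⁻¹^2 + (1:ℂ)*a^2*b⁻¹^2 + ((1:ℂ)/2)*a^2*a⁻¹*b⁻¹^2 + (1:ℂ)*a^3*a⁻¹*b⁻¹^2) * hia + ((-1:ℂ) + (-1:ℂ)*b*b⁻¹) * hib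
      rw [e, hB, zero_div]

/-- the critical polynomial -/
noncomputable def Pc : Polynomial ℂ :=
  18*X^8 + 9*X^7 - 62*X^6 + 29*X^5 - 124*X^4 + 27*X^3 + 26*X^2 - X + 6

lemma Pc_eval (x : ℂ) : Pc.eval x =
    18*x^8 + 9*x^7 - 62*x^6 + 29*x^5 - 124*x^4 + 27*x^3 + 26*x^2 - x + 6 := by
  simp [Pc]

lemma Pc_natDegree : Pc.natDegree = 8 := by
  unfold Pc; compute_degree!

lemma Pc_ne_zero : Pc ≠ 0 := by
  intro h
  have h8 := Pc_natDegree
  rw [h] at h8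
  simp at h8

lemma Pc_sep : Pc.Separable := by
  rw [Polynomial.separable_def']
  have hd : derivative Pc =
      144*X^7 + 63*X^6 - 372*X^5 + 145*X^4 - 496*X^3 + 81*X^2 + 52*X - 1 := by
    unfold Pc
    simp only [derivative_add, derivative_sub, derivative_mul, derivative_X_pow,
      derivative_X, derivative_one, derivative_ofNat, Polynomial.C_eq_natCast]
    push_cast
    ring
  refine ⟨C ((119722252478820314400:ℂ))⁻¹ *
      (19978869115230493847 + 968135889712182669*X - 33839273401226237106*X^2 + 8002776736452662438*X^3 - 38455366510839374313*X^4 + 6893383561722564957*X^5 + 13333869954065929392*X^6),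
    C ((119722252478820314400:ℂ))⁻¹ *
      (150962212562648682 - 6320018723699666369*X - 966213715884873229*X^2 + 9415045786922164928*X^3 - 1858307789826955416*X^4 + 6233883952043122099*X^5 - 965843804231460693*X^6 - 1666733744258241174*X^7), ?_⟩
  rw [hd]
  have key : (19978869115230493847 + 968135889712182669*X - 33839273401226237106*X^2 + 8002776736452662438*X^3 - 38455366510839374313*X^4 + 6893383561722564957*X^5 + 13333869954065929392*X^6) * Pc
      + (150962212562648682 - 6320018723699666369*X - 966213715884873229*X^2 + 9415045786922164928*X^3 - 1858307789826955416*X^4 + 6233883952043122099*X^5 - 965843804231460693*X^6 - 1666733744258241174*X^7) *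
        (144*X^7 + 63*X^6 - 372*X^5 + 145*X^4 - 496*X^3 + 81*X^2 + 52*X - 1)
      = (119722252478820314400 : Polynomial ℂ) := by
    unfold Pc
    ring
  calc C ((119722252478820314400:ℂ))⁻¹ *
        (19978869115230493847 + 968135889712182669*X - 33839273401226237106*X^2 + 8002776736452662438*X^3 - 38455366510839374313*X^4 + 6893383561722564957*X^5 + 13333869954065929392*X^6) * Pc
      + C ((119722252478820314400:ℂ))⁻¹ *
        (150962212562648682 - 6320018723699666369*X - 966213715884873229*X^2 + 9415045786922164928*X^3 - 1858307789826955416*X^4 + 6233883952043122099*X^5 - 965843804231460693*X^6 - 1666733744258241174*X^7) *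
        (144*X^7 + 63*X^6 - 372*X^5 + 145*X^4 - 496*X^3 + 81*X^2 + 52*X - 1)
      = C ((119722252478820314400:ℂ))⁻¹ *
        ((19978869115230493847 + 968135889712182669*X - 33839273401226237106*X^2 + 8002776736452662438*X^3 - 38455366510839374313*X^4 + 6893383561722564957*X^5 + 13333869954065929392*X^6) * Pc
        + (150962212562648682 - 6320018723699666369*X - 966213715884873229*X^2 + 9415045786922164928*X^3 - 1858307789826955416*X^4 + 6233883952043122099*X^5 - 965843804231460693*X^6 - 1666733744258241174*X^7) *
          (144*X^7 + 63*X^6 - 372*X^5 + 145*X^4 - 496*X^3 + 81*X^2 + 52*X - 1)) := by ring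
    _ = C ((119722252478820314400:ℂ))⁻¹ * (119722252478820314400 : Polynomial ℂ) := by rw [key]
    _ = 1 := by
        rw [← map_ofNat (C : ℂ →+* Polynomial ℂ) 119722252478820314400, ← C_mul,
          inv_mul_cancel₀ (by norm_num : (119722252478820314400:ℂ) ≠ 0), C_1]

/-- parametrization of the critical points by the roots of `Pc` -/
noncomputable def gmap (a : ℂ) : ℂ × ℂ := (a, (12 - a - a^3 - 4*a^4) / (a*(5*a^2+7)))

lemma gmap_inj : Function.Injective gmap := fun x y h => congrArg Prod.fst h

lemma crit_eq_image :
    {p : ℂ × ℂ | IsCritPt p} = gmap '' ((Pc.roots.toFinset : Finset ℂ) : Set ℂ) := by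
  ext ⟨a, b⟩
  simp only [Set.mem_setOf_eq, Set.mem_image, Finset.mem_coe, Multiset.mem_toFinset,
    mem_roots Pc_ne_zero, IsRoot, crit_iff, Pc_eval]
  constructor
  · rintro ⟨ha, hb, hA, hB⟩
    refine ⟨a, ?_, ?_⟩
    · linear_combination (2*(4*a^4 + a^3 + 5*a^3*b + 7*a*b + a - 12)
          + 4*(12 - a - a^3 - 4*a^4)) * hA - (5*a^2+7)^2 * hB
    · have h5 : 5*a^2 + 7 ≠ 0 := by
        intro h5
        have hN : 12 - a - a^3 - 4*a^4 = 0 := by linear_combination a*b*h5 - hA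
        have h10 : (1:ℂ) = 0 := by
          linear_combination (((-241:ℂ)/913) + ((200:ℂ)/2739)*a + ((1015:ℂ)/5478)*a^2 + ((-50:ℂ)/2739)*a^3) * h5
            + (((650:ℂ)/2739) + ((-125:ℂ)/5478)*a) * hN
        exact one_ne_zero h10
      simp only [gmap, Prod.mk.injEq, eq_self_iff_true, true_and]
      rw [div_eq_iff (mul_ne_zero ha h5)]
      linear_combination -hA
  · rintro ⟨x, hx, hgx⟩
    simp only [gmap, Prod.mk.injEq] at hgx
    obtain ⟨h1, hb⟩ := hgx
    rw [h1] at hx hb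
    have ha : a ≠ 0 := by
      intro h; rw [h] at hx; norm_num at hx
    have h5 : 5*a^2 + 7 ≠ 0 := by
      intro h5
      have h10 : (1:ℂ) = 0 := by
        linear_combination (((1667279:ℂ)/10002828) + ((-516875:ℂ)/60016968)*a + ((-112895:ℂ)/7502121)*a^2 + ((23125:ℂ)/248004)*a^3 + ((-837725:ℂ)/1667138)*a^4 + ((8670625:ℂ)/60016968)*a^5 + ((27375:ℂ)/303116)*a^6 + ((-16250:ℂ)/833569)*a^7) * h5
          + (((-1668125:ℂ)/60016968) + ((40625:ℂ)/7502121)*a) * hx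
      exact one_ne_zero h10
    have hN : 12 - a - a^3 - 4*a^4 ≠ 0 := by
      intro hN
      have h10 : (1:ℂ) = 0 := by
        linear_combination (((8918455771:ℂ)/110281178700) + ((5751468383:ℂ)/661687072200)*a + ((-185508749:ℂ)/23631681150)*a^2 + ((17347991:ℂ)/15038342550)*a^3 + ((5285686501:ℂ)/55140589350)*a^4 + ((-15579483943:ℂ)/661687072200)*a^5 + ((-7759657:ℂ)/371317100)*a^6 + ((11428694:ℂ)/9190098225)*a^7) * hN
          + (((135821227:ℂ)/27570294675) + ((-41657063:ℂ)/13503817800)*a + ((-15910913:ℂ)/3375954450)*a^2 + ((22857388:ℂ)/82710884025)*a^3) * hx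
      exact one_ne_zero h10
    have hbne : b ≠ 0 := by
      rw [← hb]
      exact div_ne_zero hN (mul_ne_zero ha h5)
    have hab : b * (a*(5*a^2+7)) = 12 - a - a^3 - 4*a^4 := by
      rw [← hb, div_mul_cancel₀ _ (mul_ne_zero ha h5)]
    have hA2 : 4*a^4 + a^3 + 5*a^3*b + 7*a*b + a - 12 = 0 := by linear_combination hab
    have h2 : (5*a^2+7)^2 * (2*a^2*b^2 - 2*a^4 - a^3 + 8*a^2 + a - 6) = 0 := by
      linear_combination (2*(4*a^4 + a^3 + 5*a^3*b + 7*a*b + a - 12)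
        + 4*(12 - a - a^3 - 4*a^4)) * hA2 - hx
    exact ⟨ha, hbne, hA2, (mul_eq_zero.mp h2).resolve_left (pow_ne_zero 2 h5)⟩

lemma hess_val {a b : ℂ} (ha : a ≠ 0) (hb : b ≠ 0) :
    hessDet (a, b) =
      ((288 - 72*a - 573*a^2 + 128*a^3 + 282*a^4 - 24*a^5 - 65*a^6)
        + (-168*a + 28*a^2 + 224*a^3 - 28*a^4 - 56*a^5)*b) / (4*a^6*b^4) := by
  have hia := mul_inv_cancel₀ ha
  have hib := mul_inv_cancel₀ hb
  simp only [hessDet]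
  rw [deriv2_fst b ha, deriv2_snd a hb, deriv_mixed ha hb]
  linear_combination (((65:ℂ)/4)*b⁻¹^4 + (-14:ℂ)*a⁻¹*b⁻¹^3 + (2:ℂ)*a⁻¹*b⁻¹^4 + (14:ℂ)*a⁻¹*b*b⁻¹^4 + (-7:ℂ)*a⁻¹^2*b⁻¹^3 + ((-23:ℂ)/2)*a⁻¹^2*b⁻¹^4 + (7:ℂ)*a⁻¹^2*b*b⁻¹^4 + (-14:ℂ)*a⁻¹^3*b⁻¹^4 + (-56:ℂ)*a⁻¹^3*b*b⁻¹^4 + ((573:ℂ)/4)*a⁻¹^4*b⁻¹^4 + (-7:ℂ)*a⁻¹^4*b*b⁻¹^4 + (18:ℂ)*a⁻¹^5*b⁻¹^4 + (42:ℂ)*a⁻¹^5*b*b⁻¹^4 + ((65:ℂ)/4)*a*a⁻¹*b⁻¹^4 + (-14:ℂ)*a*a⁻¹^2*b⁻¹^3 + (4:ℂ)*a*a⁻¹^2*b⁻¹^4 + (14:ℂ)*a*a⁻¹^2*b*b⁻¹^4 + ((-69:ℂ)/2)*a*a⁻¹^3*b⁻¹^4 + (7:ℂ)*a*a⁻¹^3*b*b⁻¹^4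 + (-32:ℂ)*a*a⁻¹^4*b⁻¹^4 + (-56:ℂ)*a*a⁻¹^4*b*b⁻¹^4 + ((573:ℂ)/4)*a*a⁻¹^5*b⁻¹^4 + (-7:ℂ)*a*a⁻¹^5*b*b⁻¹^4 + ((65:ℂ)/4)*a^2*a⁻¹^2*b⁻¹^4 + (6:ℂ)*a^2*a⁻¹^3*b⁻¹^4 + (14:ℂ)*a^2*a⁻¹^3*b*b⁻¹^4 + ((-141:ℂ)/2)*a^2*a⁻¹^4*b⁻¹^4 + (7:ℂ)*a^2*a⁻¹^4*b*b⁻¹^4 + (-32:ℂ)*a^2*a⁻¹^5*b⁻¹^4 + (-56:ℂ)*a^2*a⁻¹^5*b*b⁻¹^4 + ((65:ℂ)/4)*a^3*a⁻¹^3*b⁻¹^4 + (6:ℂ)*a^3*a⁻¹^4*b⁻¹^4 + (14:ℂ)*a^3*a⁻¹^4*b*b⁻¹^4 + ((-141:ℂ)/2)*a^3*a⁻¹^5*b⁻¹^4 + (7:ℂ)*a^3*a⁻¹^5*b*b⁻¹^4 + ((65:ℂ)/4)*a^4*a⁻¹^4*b⁻¹^4 + (6:ℂ)*a^4*a⁻¹^5*b⁻¹^4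 + (14:ℂ)*a^4*a⁻¹^5*b*b⁻¹^4 + ((65:ℂ)/4)*a^5*a⁻¹^5*b⁻¹^4) * hia + ((14:ℂ)*a⁻¹*b⁻¹^3 + (7:ℂ)*a⁻¹^2*b⁻¹^3 + (-56:ℂ)*a⁻¹^3*b⁻¹^3 + (-7:ℂ)*a⁻¹^4*b⁻¹^3 + (42:ℂ)*a⁻¹^5*b⁻¹^3) * hib

/-- `W` has exactly 8 critical points in `(ℂ∖{0})²`, and each of them is
nondegenerate (nonvanishing Hessian determinant). -/
theorem W_critical_points :
    {p : ℂ × ℂ | IsCritPt p}.ncard = 8 ∧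
      ∀ p : ℂ × ℂ, IsCritPt p → hessDet p ≠ 0 := by
  constructor
  · rw [crit_eq_image, Set.ncard_image_of_injective _ gmap_inj, Set.ncard_coe_finset,
      Multiset.toFinset_card_of_nodup (Polynomial.nodup_roots Pc_sep)]
    have hc := (Polynomial.splits_iff_card_roots (f := Pc)).mp (IsAlgClosed.splits Pc)
    rw [hc, Pc_natDegree]
  · rintro ⟨a, b⟩ hp
    rw [crit_iff] at hp
    obtain ⟨ha, hb, hA, hB⟩ := hp
    have hx : 18*a^8 + 9*a^7 - 62*a^6 + 29*a^5 - 124*a^4 + 27*a^3 + 26*a^2 - a + 6 = 0 := by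
      linear_combination (2*(4*a^4 + a^3 + 5*a^3*b + 7*a*b + a - 12)
          + 4*(12 - a - a^3 - 4*a^4)) * hA - (5*a^2+7)^2 * hB
    rw [hess_val ha hb]
    refine div_ne_zero (fun h0 => ?_)
      (mul_ne_zero (mul_ne_zero (by norm_num) (pow_ne_zero 6 ha)) (pow_ne_zero 4 hb))
    have hv : (89:ℂ)*a^3 + 144*a^4 - 891*a^5 + 192*a^6 + 87*a^7 + 48*a^8 - 101*a^9 = 0 := by
      linear_combination (a*(5*a^2+7)) * h0
        - ((-168:ℂ)*a + (28:ℂ)*a^2 + (224:ℂ)*a^3 + (-28:ℂ)*a^4 + (-56:ℂ)*a^5) * hA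
    have h10 : (1:ℂ) = 0 := by
      linear_combination (((-160993877619811:ℂ)/10927551339797400) + ((223451680093127:ℂ)/1457006845306320)*a + ((2063009366312579:ℂ)/14570068453063200)*a^2 + ((-1810677997478401:ℂ)/3122157525656400)*a^3 + ((3202247643132509:ℂ)/21855102679594800)*a^4 + ((-121945871561113:ℂ)/397365503265360)*a^5 + ((28277815242779:ℂ)/693812783479200)*a^6 + ((211179929525953:ℂ)/2428344742177200)*a^7) * hv
        + (((1:ℂ)/6) + ((1:ℂ)/36)*a + ((-155:ℂ)/216)*a^2 + ((-1053732838116977:ℂ)/1365943917474675)*a^3 + ((17401177820590727:ℂ)/3973655032653600)*a^4 + ((-727227317978649:ℂ)/809448247392400)*a^5 + ((-9760684970955497:ℂ)/21855102679594800)*a^6 + ((-5402507684991997:ℂ)/21855102679594800)*a^7 + ((21329172882121253:ℂ)/43710205359189600)*a^8) * hx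
    exact one_ne_zero h10
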